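/- Let R be a principal ideal domain and P a nonzero prime ideal of R. Then P² is not an intersection of prime ideals: for every set S of prime ideals of R, the infimum of S is not equal to P² (while P² is, trivially, a product of prime ideals). -/

import Mathlib

/-- In a principal ideal domain, the square of a nonzero prime ideal is not
an intersection of prime ideals. -/
theorem stmt_16 {R : Type*} [CommRing R] [IsDomain R] [IsPrincipalIdealRing R]
    (P : Ideal R) (hP : P.IsPrime) (hP0 : P ≠ ⊥) :
    ∀ S : Set (Ideal R), (∀ Q ∈ S, Q.IsPrime) → sInf S ≠ P ^ 2 := by
  intro S hS heq
  -- Every prime in S contains P^2, hence contains P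
  have hle : P ≤ P ^ 2 := by
    rw [← heq]
    refine le_sInf ?_
    intro Q hQ
    have hQp := hS Q hQ
    have h2 : P ^ 2 ≤ Q := heq ▸ sInf_le hQ
    rw [pow_two] at h2
    rcases (Ideal.IsPrime.mul_le hQp).mp h2 with h | h <;> exact h
  -- So P = P^2; derive contradiction using principal generator
  obtain ⟨p, hp⟩ := (IsPrincipalIdealRing.principal P).principal
  have hp0 : p ≠ 0 := by
    rintro rfl
    exact hP0 (by simpa [Ideal.span_singleton_eq_bot.mpr rfl] using hp)
  have hmem : p ∈ P ^ 2 := hle (hp ▸ Ideal.mem_span_singleton_self p)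
  rw [hp, show Submodule.span R {p} = Ideal.span {p} from rfl, Ideal.span_singleton_pow, Ideal.mem_span_singleton] at hmem
  obtain ⟨a, ha⟩ := hmem
  have h1 : p * 1 = p * (p * a) := by ring_nf; rw [sq] at ha; linear_combination ha
  have hunit : IsUnit p := IsUnit.of_mul_eq_one (a := p) a (mul_left_cancel₀ hp0 h1).symm
  exact hP.ne_top (hp ▸ Ideal.span_singleton_eq_top.mpr hunit)
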